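/- With the setup of the previous statement, define M' by swapping partners along each pair (a, a') with φ(a,a'): M' = {(s,t) : φ(s, M(t))} ∪ M \ {(s, M(s)) : s ∈ S(M)}. Then M' is a Borel perfect matching of H^K covering the same vertices as M, and ∫_A dist_H(x, M'(x)) dλ(x) ≤ ∫_A dist_H(x, M(x)) dλ(x) − λ(S(M)). -/

import Mathlib

set_option linter.unusedSectionVars false

open MeasureTheory

namespace Stmt8Aux

variable {V : Type*} {G : SimpleGraph V}

/-- Build a walk from an adjacency sequence. -/
lemma walk_of_seq : ∀ (k : ℕ) (f : ℕ → V), (∀ i, i < k → G.Adj (f i) (f (i+1))) →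
    ∃ w : G.Walk (f 0) (f k), w.length = k ∧ ∀ i ≤ k, w.getVert i = f i := by
  intro k
  induction k with
  | zero => intro f _; exact ⟨SimpleGraph.Walk.nil, rfl, by
      intro i hi; interval_cases i; simp [SimpleGraph.Walk.getVert_zero]⟩
  | succ k ih =>
    intro f hf
    obtain ⟨w, hwl, hwv⟩ := ih (fun i => f (i+1)) (fun i hi => hf (i+1) (by omega))
    refine ⟨SimpleGraph.Walk.cons (hf 0 (by omega)) w, by simp [hwl], ?_⟩
    intro i hi
    cases i with
    | zero => simp [SimpleGraph.Walk.getVert_zero]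
    | succ i => rw [SimpleGraph.Walk.getVert_cons_succ]; exact hwv i (by omega)

lemma getVert_injOn_of_isPath {u v : V} {w : G.Walk u v} (hw : w.IsPath) :
    ∀ i ≤ w.length, ∀ j ≤ w.length, w.getVert i = w.getVert j → i = j := by
  induction w with
  | nil => intro i hi j hj _; simp at hi hj; omega
  | @cons a b c h q ih =>
    rw [SimpleGraph.Walk.cons_isPath_iff] at hw
    intro i hi j hj hij
    simp only [SimpleGraph.Walk.length_cons] at hi hj
    match i, j with
    | 0, 0 => rfl
    | 0, j+1 =>
      exfalso
      rw [SimpleGraph.Walk.getVert_zero, SimpleGraph.Walk.getVert_cons_succ] at hij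
      exact hw.2 (SimpleGraph.Walk.mem_support_iff_exists_getVert.mpr ⟨j, hij.symm, by omega⟩)
    | i+1, 0 =>
      exfalso
      rw [SimpleGraph.Walk.getVert_zero, SimpleGraph.Walk.getVert_cons_succ] at hij
      exact hw.2 (SimpleGraph.Walk.mem_support_iff_exists_getVert.mpr ⟨i, hij, by omega⟩)
    | i+1, j+1 =>
      rw [SimpleGraph.Walk.getVert_cons_succ, SimpleGraph.Walk.getVert_cons_succ] at hij
      have := ih hw.1 i (by omega) j (by omega) hij
      omega

lemma isPath_of_getVert_injOn {u v : V} {w : G.Walk u v}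
    (h : ∀ i ≤ w.length, ∀ j ≤ w.length, w.getVert i = w.getVert j → i = j) : w.IsPath := by
  induction w with
  | nil => simp
  | @cons a b c hadj q ih =>
    rw [SimpleGraph.Walk.cons_isPath_iff]
    constructor
    · apply ih
      intro i hi j hj hij
      have := h (i+1) (by simp; omega) (j+1) (by simp; omega)
        (by rwa [SimpleGraph.Walk.getVert_cons_succ, SimpleGraph.Walk.getVert_cons_succ])
      omega
    · intro hmem
      obtain ⟨n, hn, hnl⟩ := SimpleGraph.Walk.mem_support_iff_exists_getVert.mp hmem
      have := h 0 (by simp) (n+1) (by simp; omega)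
        (by rw [SimpleGraph.Walk.getVert_zero, SimpleGraph.Walk.getVert_cons_succ, hn])
      omega

/-- A function with measurable graph between standard Borel spaces is measurable. -/
lemma measurable_of_graph {V : Type} [MeasurableSpace V] [StandardBorelSpace V] {f : V → V}
    (h : MeasurableSet {p : V × V | f p.1 = p.2}) : Measurable f := by
  intro t ht
  have heq : f ⁻¹' t = Prod.fst '' ({p : V × V | f p.1 = p.2} ∩ (Set.univ ×ˢ t)) := by
    ext x
    constructor
    · intro hx; exact ⟨(x, f x), ⟨rfl, ⟨trivial, hx⟩⟩, rfl⟩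
    · rintro ⟨⟨y, z⟩, ⟨hz, -, hzt⟩, rfl⟩
      simp only [Set.mem_setOf_eq] at hz
      simpa [Set.mem_preimage, hz] using hzt
  rw [heq]
  exact (h.inter (MeasurableSet.univ.prod ht)).image_of_measurable_injOn measurable_fst
    (fun p hp q hq hpq => by
      have : f p.1 = p.2 := hp.1
      have h2 : f q.1 = q.2 := hq.1
      exact Prod.ext hpq (by rw [← this, ← h2, hpq]))


section DistMeas
variable {V : Type} [MeasurableSpace V] [StandardBorelSpace V]

/-- In an acyclic graph, an injective adjacency sequence realizes the distance. -/
lemma path_seq_dist {G : SimpleGraph V} (hac : G.IsAcyclic) {k : ℕ} (hk : 1 ≤ k)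
    {f : ℕ → V} (h1 : ∀ i < k, G.Adj (f i) (f (i+1)))
    (h2 : ∀ i ≤ k, ∀ j ≤ k, i ≠ j → f i ≠ f j) :
    ∃ w : G.Walk (f 0) (f k), w.length = k ∧ (∀ i ≤ k, w.getVert i = f i) ∧ w.IsPath ∧
      G.dist (f 0) (f k) = k := by
  classical
  obtain ⟨w, hwl, hwv⟩ := walk_of_seq (G := G) k f h1
  have hpath : w.IsPath := by
    apply isPath_of_getVert_injOn
    intro i hi j hj hij
    rw [hwl] at hi hj
    by_contra hne
    exact h2 i hi j hj hne (by rw [← hwv i hi, ← hwv j hj, hij])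
  have hne : f 0 ≠ f k := h2 0 (by omega) k le_rfl (by omega)
  have hreach : G.Reachable (f 0) (f k) := w.reachable
  obtain ⟨w₂, hw₂⟩ := hreach.exists_walk_length_eq_dist
  have hbl : w₂.bypass.length = G.dist (f 0) (f k) :=
    le_antisymm (hw₂ ▸ w₂.length_bypass_le) (SimpleGraph.dist_le _)
  have hPeq : (⟨w, hpath⟩ : G.Path (f 0) (f k)) = ⟨w₂.bypass, w₂.bypass_isPath⟩ :=
    SimpleGraph.isAcyclic_iff_path_unique.mp hac _ _
  have hww : w = w₂.bypass := congrArg Subtype.val hPeq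
  refine ⟨w, hwl, hwv, hpath, ?_⟩
  rw [← hbl, ← hww, hwl]

lemma measurableSet_dist_eq {G : SimpleGraph V} (hac : G.IsAcyclic)
    (hBorel : MeasurableSet {p : V × V | G.Adj p.1 p.2}) (k : ℕ) (hk : 1 ≤ k) :
    MeasurableSet {q : V × V | G.dist q.1 q.2 = k} := by
  classical
  obtain ⟨e, he⟩ := exists_measurableEmbedding_real V
  have heq_meas : ∀ i j : ℕ, MeasurableSet {f : ℕ → V | f i = f j} := by
    intro i j
    have hset : {f : ℕ → V | f i = f j} = {f : ℕ → V | e (f i) = e (f j)} := by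
      ext f
      exact ⟨fun h => by simp only [Set.mem_setOf_eq] at *; rw [h],
        fun h => he.injective h⟩
    rw [hset]
    exact measurableSet_eq_fun (he.measurable.comp (measurable_pi_apply i))
      (he.measurable.comp (measurable_pi_apply j))
  set P : Set (ℕ → V) := {f | (∀ i < k, G.Adj (f i) (f (i+1))) ∧
      (∀ i ≤ k, ∀ j ≤ k, i ≠ j → f i ≠ f j) ∧ (∀ i, k ≤ i → f i = f k)} with hPdef
  have hPmeas : MeasurableSet P := by
    have hsplit : P = {f : ℕ → V | ∀ i < k, G.Adj (f i) (f (i+1))} ∩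
        ({f : ℕ → V | ∀ i ≤ k, ∀ j ≤ k, i ≠ j → f i ≠ f j} ∩
         {f : ℕ → V | ∀ i, k ≤ i → f i = f k}) := rfl
    rw [hsplit]
    refine MeasurableSet.inter ?_ (MeasurableSet.inter ?_ ?_)
    · have h1 : {f : ℕ → V | ∀ i < k, G.Adj (f i) (f (i+1))} =
          ⋂ i, ⋂ (_ : i < k), (fun f : ℕ → V => (f i, f (i+1))) ⁻¹' {p : V × V | G.Adj p.1 p.2} := by
        ext f; simp [Set.mem_iInter]
      rw [h1]
      exact MeasurableSet.iInter fun i => MeasurableSet.iInter fun _ =>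
        hBorel.preimage (Measurable.prodMk (measurable_pi_apply i) (measurable_pi_apply (i+1)))
    · have h2 : {f : ℕ → V | ∀ i ≤ k, ∀ j ≤ k, i ≠ j → f i ≠ f j} =
          ⋂ i, ⋂ j, ⋂ (_ : i ≤ k), ⋂ (_ : j ≤ k), ⋂ (_ : i ≠ j), ({f : ℕ → V | f i = f j})ᶜ := by
        ext f; simp only [Set.mem_iInter, Set.mem_compl_iff, Set.mem_setOf_eq]; tauto
      rw [h2]
      exact .iInter fun i => .iInter fun j => .iInter fun _ => .iInter fun _ =>
        .iInter fun _ => (heq_meas i j).compl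
    · have h3 : {f : ℕ → V | ∀ i, k ≤ i → f i = f k} =
          ⋂ i, ⋂ (_ : k ≤ i), {f : ℕ → V | f i = f k} := by
        ext f; simp [Set.mem_iInter]
      rw [h3]
      exact .iInter fun i => .iInter fun _ => heq_meas i k
  have hproj : Measurable (fun f : ℕ → V => (f 0, f k)) :=
    Measurable.prodMk (measurable_pi_apply 0) (measurable_pi_apply k)
  have himage : (fun f : ℕ → V => (f 0, f k)) '' P = {q : V × V | G.dist q.1 q.2 = k} := by
    ext ⟨x, y⟩
    constructor
    · rintro ⟨f, ⟨h1, h2, _⟩, hfxy⟩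
      obtain ⟨w, hwl, hwv, hwp, hd⟩ := path_seq_dist hac hk h1 h2
      have hx : f 0 = x := congrArg Prod.fst hfxy
      have hy : f k = y := congrArg Prod.snd hfxy
      simp only [Set.mem_setOf_eq]
      rw [← hx, ← hy]; exact hd
    · intro hd
      simp only [Set.mem_setOf_eq] at hd
      have hreach : G.Reachable x y := SimpleGraph.Reachable.of_dist_ne_zero (by omega)
      obtain ⟨w, hwl⟩ := hreach.exists_walk_length_eq_dist
      have hbl : w.bypass.length = k := by
        refine le_antisymm (le_trans w.length_bypass_le (le_of_eq (hwl.trans hd))) ?_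
        rw [← hd]; exact SimpleGraph.dist_le _
      refine ⟨fun i => w.bypass.getVert (min i k), ⟨?_, ?_, ?_⟩, ?_⟩
      · intro i hi
        show G.Adj (w.bypass.getVert (min i k)) (w.bypass.getVert (min (i+1) k))
        rw [min_eq_left (by omega), min_eq_left (by omega)]
        exact w.bypass.adj_getVert_succ (by omega)
      · intro i hi j hj hij
        show w.bypass.getVert (min i k) ≠ w.bypass.getVert (min j k)
        rw [min_eq_left hi, min_eq_left hj]
        intro hc
        exact hij (getVert_injOn_of_isPath w.bypass_isPath i (by omega) j (by omega) hc)
      · intro i hi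
        show w.bypass.getVert (min i k) = w.bypass.getVert (min k k)
        rw [min_eq_right hi, min_self]
      · show (w.bypass.getVert (min 0 k), w.bypass.getVert (min k k)) = (x, y)
        rw [min_eq_left (by omega), min_self, SimpleGraph.Walk.getVert_zero]
        have hgl : w.bypass.getVert w.bypass.length = y := w.bypass.getVert_length
        rw [hbl] at hgl
        rw [hgl]
  have hinj : Set.InjOn (fun f : ℕ → V => (f 0, f k)) P := by
    rintro f ⟨hf1, hf2, hf3⟩ g ⟨hg1, hg2, hg3⟩ hfg
    have hx : f 0 = g 0 := congrArg Prod.fst hfg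
    have hy : f k = g k := congrArg Prod.snd hfg
    obtain ⟨wf, hwfl, hwfv, hwfp, _⟩ := path_seq_dist hac hk hf1 hf2
    obtain ⟨wg, hwgl, hwgv, hwgp, _⟩ := path_seq_dist hac hk hg1 hg2
    have hPeq : (⟨wf, hwfp⟩ : G.Path (f 0) (f k)) =
        ⟨(wg.copy hx.symm hy.symm), (SimpleGraph.Walk.isPath_copy _ _ _).mpr hwgp⟩ :=
      SimpleGraph.isAcyclic_iff_path_unique.mp hac _ _
    have hweq : wf = wg.copy hx.symm hy.symm := congrArg Subtype.val hPeq
    funext i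
    rcases le_or_gt i k with hi | hi
    · have hv := hwfv i hi
      rw [hweq, SimpleGraph.Walk.getVert_copy] at hv
      rw [← hv, hwgv i hi]
    · rw [hf3 i (by omega), hg3 i (by omega), hy]
  rw [← himage]
  exact hPmeas.image_of_measurable_injOn hproj hinj

end DistMeas

end Stmt8Aux


/-- Claim 1: Swapping partners along each pair (a,a') with φ(a,a')
produces a Borel perfect matching M' of H^K covering the same vertices, with
∫_A dist_H(x,M'(x)) dλ ≤ ∫_A dist_H(x,M(x)) dλ − λ(S(M)). -/
theorem stmt8 {V : Type} [MeasurableSpace V] [StandardBorelSpace V]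
    (μ : Measure V) [IsProbabilityMeasure μ]
    (H : SimpleGraph V) (hBorel : MeasurableSet {p : V × V | H.Adj p.1 p.2})
    (hpres : ∀ f : V ≃ᵐ V, (∀ x, f x = x ∨ H.Adj x (f x)) → MeasurePreserving f μ μ)
    (hac : H.IsAcyclic) (hreg : ∀ v, {w | H.Adj v w}.encard = 2)
    (A B : Set V) (hA : MeasurableSet A) (hAB : A ∪ B = Set.univ) (hdisj : Disjoint A B)
    (hbip : ∀ u v, H.Adj u v → (u ∈ A ∧ v ∈ B) ∨ (u ∈ B ∧ v ∈ A))
    (K : ℕ) (hK : Odd K)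
    (m : V → V) (hm : Measurable m) (hinv : Function.Involutive m)
    (hmatch : ∀ x, Odd (H.dist x (m x)) ∧ H.dist x (m x) ≤ K)
    (inRay : V → V → Prop)
    (hray : ∀ x y, inRay x y ↔ H.Reachable x y ∧
      (H.dist y (m x) : ℤ) = |(H.dist x y : ℤ) - (H.dist x (m x) : ℤ)|)
    (φ : V → V → Prop)
    (hφ : ∀ a a', φ a a' ↔ (H.dist a a' = 2 ∧ inRay a' a ∧ inRay a a'))
    (S : Set V) (hS : S = {a ∈ A | ∃ a' ∈ A, φ a a'})
    -- M' : swap partners along φ-pairs, keep M elsewhere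
    (m' : V → V)
    (hm'1 : ∀ a a', a ∈ A → a' ∈ A → φ a a' → m' a = m a')
    (hm'2 : ∀ a a', a ∈ A → a' ∈ A → φ a a' → m' (m a) = a')
    (hm'3 : ∀ x, x ∈ A → (¬ ∃ a' ∈ A, φ x a') → m' x = m x ∧ m' (m x) = x) :
    Measurable m' ∧ Function.Involutive m' ∧
    (∀ x, Odd (H.dist x (m' x)) ∧ H.dist x (m' x) ≤ K) ∧
    ∫ x in A, (H.dist x (m' x) : ℝ) ∂μ ≤
      ∫ x in A, (H.dist x (m x) : ℝ) ∂μ - (μ S).toReal := by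
  classical
  obtain ⟨e, he⟩ := exists_measurableEmbedding_real V
  -- ### basic set facts
  have hnotA : ∀ z : V, z ∉ A ↔ z ∈ B := by
    intro z
    constructor
    · intro hz
      have hz2 : z ∈ A ∪ B := by rw [hAB]; trivial
      simp only [Set.mem_union] at hz2
      tauto
    · intro hz hz'
      exact Set.disjoint_left.mp hdisj hz' hz
  have hcross : ∀ u v : V, H.Adj u v → (u ∈ A ↔ v ∉ A) := by
    intro u v huv
    rcases hbip u v huv with ⟨h1, h2⟩ | ⟨h1, h2⟩
    · exact ⟨fun _ => (hnotA v).mpr h2, fun _ => h1⟩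
    · exact iff_of_false ((hnotA u).mpr h1) (not_not_intro h2)
  -- parity along walks
  have hpar : ∀ {u v : V} (w : H.Walk u v), ((u ∈ A) ↔ (v ∈ A)) ↔ Even w.length := by
    intro u v w
    induction w with
    | nil => simp
    | @cons a b c h q ih =>
      have h1 := hcross a b h
      rw [SimpleGraph.Walk.length_cons, Nat.even_add_one, ← ih]
      tauto
  have hodd_cross : ∀ x y : V, Odd (H.dist x y) → (x ∈ A ↔ y ∉ A) := by
    intro x y hodd
    have hne0 : H.dist x y ≠ 0 := by
      intro h0; rw [h0, Nat.odd_iff] at hodd; omega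
    obtain ⟨w, hwl⟩ := (SimpleGraph.Reachable.of_dist_ne_zero hne0).exists_walk_length_eq_dist
    have h2 := hpar w
    rw [hwl] at h2
    have h3 : ¬ Even (H.dist x y) := Nat.not_even_iff_odd.mpr hodd
    tauto
  have hmA : ∀ x, x ∈ A ↔ m x ∉ A := fun x => hodd_cross x (m x) (hmatch x).1
  have hmB : ∀ x, x ∉ A → m x ∈ A := by
    intro x hx
    by_contra hmx
    exact hx ((hmA x).mpr hmx)
  -- ### φ facts
  have hφd : ∀ a b : V, φ a b → H.dist a b = 2 := fun a b h => ((hφ a b).mp h).1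
  have hφsymm : ∀ a b : V, φ a b → φ b a := by
    intro a b h
    rcases (hφ a b).mp h with ⟨hd, h1, h2⟩
    exact (hφ b a).mpr ⟨by rwa [SimpleGraph.dist_comm], h2, h1⟩
  have hφ1 : ∀ a b : V, φ a b → (H.dist a (m b) : ℤ) = |2 - (H.dist b (m b) : ℤ)| := by
    intro a b h
    rcases (hφ a b).mp h with ⟨hd, h1, h2⟩
    have h3 := ((hray b a).mp h1).2
    rw [show H.dist b a = H.dist a b from SimpleGraph.dist_comm] at h3
    rwa [hd] at h3
  have hφ2 : ∀ a b : V, φ a b → (H.dist b (m a) : ℤ) = |2 - (H.dist a (m a) : ℤ)| := by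
    intro a b h
    rcases (hφ a b).mp h with ⟨hd, h1, h2⟩
    have := ((hray a b).mp h2).2
    rwa [hd] at this
  have hφA : ∀ a b : V, a ∈ A → φ a b → b ∈ A := by
    intro a b ha hab
    have hd := hφd a b hab
    have hne : H.dist a b ≠ 0 := by omega
    obtain ⟨w, hwl⟩ := (SimpleGraph.Reachable.of_dist_ne_zero hne).exists_walk_length_eq_dist
    have h2 := hpar w
    rw [hwl, hd] at h2
    exact (h2.mpr (by decide)).mp ha
  -- uniqueness of partner
  have huniq : ∀ a b c : V, a ∈ A → b ∈ A → c ∈ A → φ a b → φ a c → b = c := by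
    intro a b c ha hb hc h1 h2
    rw [← hm'2 a b ha hb h1, ← hm'2 a c ha hc h2]
  have hSA : S ⊆ A := by rw [hS]; intro x hx; exact hx.1
  have hSmem : ∀ x : V, x ∈ S ↔ (x ∈ A ∧ ∃ y, y ∈ A ∧ φ x y) := by
    intro x; rw [hS]; simp [Set.mem_setOf_eq]
  -- ### the partner function p
  set p : V → V := fun x => if h : x ∈ A ∧ ∃ y, y ∈ A ∧ φ x y then h.2.choose else x with hpdef
  have hpS : ∀ x ∈ S, p x ∈ A ∧ φ x (p x) := by
    intro x hx
    have h := (hSmem x).mp hx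
    rw [hpdef]
    simp only [dif_pos h]
    exact h.2.choose_spec
  have hpoff : ∀ x, x ∉ S → p x = x := by
    intro x hx
    rw [hpdef]
    simp only []
    rw [dif_neg (fun h => hx ((hSmem x).mpr h))]
  have hpval : ∀ x y, x ∈ A → y ∈ A → φ x y → p x = y := by
    intro x y hx hy hxy
    have hxS : x ∈ S := (hSmem x).mpr ⟨hx, y, hy, hxy⟩
    obtain ⟨h1, h2⟩ := hpS x hxS
    exact huniq x (p x) y hx h1 hy h2 hxy
  have hpSmem : ∀ x ∈ S, p x ∈ S := by
    intro x hx
    obtain ⟨h1, h2⟩ := hpS x hx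
    exact (hSmem (p x)).mpr ⟨h1, x, hSA hx, hφsymm _ _ h2⟩
  have hpp : ∀ x ∈ S, p (p x) = x := by
    intro x hx
    obtain ⟨h1, h2⟩ := hpS x hx
    exact hpval (p x) x h1 (hSA hx) (hφsymm _ _ h2)
  have hpne : ∀ x ∈ S, p x ≠ x := by
    intro x hx heq
    have := hφd x (p x) (hpS x hx).2
    rw [heq] at this
    simp [SimpleGraph.dist_self] at this
  -- ### values of m'
  have hm'S : ∀ x ∈ S, m' x = m (p x) := by
    intro x hx
    exact hm'1 x (p x) (hSA hx) (hpS x hx).1 (hpS x hx).2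
  have hm'AnotS : ∀ x, x ∈ A → x ∉ S → m' x = m x := by
    intro x hx hxs
    exact (hm'3 x hx (fun h => hxs ((hSmem x).mpr ⟨hx, by simpa using h⟩))).1
  have hm'B1 : ∀ x, x ∉ A → m x ∈ S → m' x = p (m x) := by
    intro x hx hmx
    have h1 := hm'2 (m x) (p (m x)) (hSA hmx) (hpS _ hmx).1 (hpS _ hmx).2
    rwa [hinv x] at h1
  have hm'B2 : ∀ x, x ∉ A → m x ∉ S → m' x = m x := by
    intro x hx hmx
    have h1 := (hm'3 (m x) (hmB x hx) (fun h => hmx ((hSmem (m x)).mpr ⟨hmB x hx, by simpa using h⟩))).2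
    rwa [hinv x] at h1

  -- ### distance arithmetic
  have hnat : ∀ a b : V, φ a b → H.dist a (m b) = (2 - (H.dist b (m b) : ℤ)).natAbs := by
    intro a b h
    have h1 := hφ1 a b h
    have h2 : (H.dist a (m b) : ℤ) = ((2 - (H.dist b (m b) : ℤ)).natAbs : ℤ) := by
      rw [h1, Int.abs_eq_natAbs]
    exact_mod_cast h2
  have hnatprop : ∀ j : ℕ, Odd j → j ≤ K →
      Odd ((2 - (j : ℤ)).natAbs) ∧ ((2 - (j : ℤ)).natAbs) ≤ K := by
    intro j hj hjK
    have hK' := hK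
    rw [Nat.odd_iff] at hj hK' ⊢
    omega
  -- ### part 3 : m' is a matching in H^K
  have hpart3 : ∀ x, Odd (H.dist x (m' x)) ∧ H.dist x (m' x) ≤ K := by
    intro x
    by_cases hxA : x ∈ A
    · by_cases hxS : x ∈ S
      · rw [hm'S x hxS]
        have hd := hnat x (p x) (hpS x hxS).2
        have hmm := hmatch (p x)
        rw [hd]
        exact hnatprop _ hmm.1 hmm.2
      · rw [hm'AnotS x hxA hxS]; exact hmatch x
    · by_cases hxS : m x ∈ S
      · rw [hm'B1 x hxA hxS]
        have h2 := hφ2 (m x) (p (m x)) (hpS (m x) hxS).2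
        rw [hinv x] at h2
        have h3 : H.dist x (p (m x)) = (2 - (H.dist (m x) x : ℤ)).natAbs := by
          have h4 : (H.dist x (p (m x)) : ℤ) = ((2 - (H.dist (m x) x : ℤ)).natAbs : ℤ) := by
            rw [show H.dist x (p (m x)) = H.dist (p (m x)) x from SimpleGraph.dist_comm]
            rw [h2, Int.abs_eq_natAbs]
          exact_mod_cast h4
        rw [h3, show H.dist (m x) x = H.dist x (m x) from SimpleGraph.dist_comm]
        have hmm := hmatch x
        exact hnatprop _ hmm.1 hmm.2
      · rw [hm'B2 x hxA hxS]; exact hmatch x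
  -- ### involutivity
  have hinv' : Function.Involutive m' := by
    intro x
    by_cases hxA : x ∈ A
    · by_cases hxS : x ∈ S
      · rw [hm'S x hxS]
        have h1 : m (p x) ∉ A := (hmA (p x)).mp (hpS x hxS).1
        have h2 : m (m (p x)) ∈ S := by rw [hinv]; exact hpSmem x hxS
        rw [hm'B1 _ h1 h2, hinv, hpp x hxS]
      · rw [hm'AnotS x hxA hxS]
        have h1 : m x ∉ A := (hmA x).mp hxA
        have h2 : m (m x) ∉ S := by rw [hinv]; exact hxS
        rw [hm'B2 _ h1 h2, hinv]
    · by_cases hxS : m x ∈ S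
      · rw [hm'B1 x hxA hxS]
        have h1 : p (m x) ∈ S := hpSmem _ hxS
        rw [hm'S _ h1, hpp _ hxS, hinv]
      · rw [hm'B2 x hxA hxS]
        have h1 : m x ∈ A := hmB x hxA
        rw [hm'AnotS _ h1 hxS, hinv]
  -- ### unique common neighbours
  have hcu : ∀ x y z z' : V, x ≠ y → H.Adj x z → H.Adj z y → H.Adj x z' → H.Adj z' y → z = z' := by
    intro x y z z' hxy h1 h2 h3 h4
    have hp1 : (SimpleGraph.Walk.cons h1 (SimpleGraph.Walk.cons h2 SimpleGraph.Walk.nil)).IsPath := by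
      rw [SimpleGraph.Walk.isPath_def]
      simp [SimpleGraph.Walk.support_cons, h1.ne, hxy, h2.ne]
    have hp2 : (SimpleGraph.Walk.cons h3 (SimpleGraph.Walk.cons h4 SimpleGraph.Walk.nil)).IsPath := by
      rw [SimpleGraph.Walk.isPath_def]
      simp [SimpleGraph.Walk.support_cons, h3.ne, hxy, h4.ne]
    have hPeq : (⟨_, hp1⟩ : H.Path x y) = ⟨_, hp2⟩ :=
      SimpleGraph.isAcyclic_iff_path_unique.mp hac _ _
    have hw := congrArg Subtype.val hPeq
    have := congrArg (fun w : H.Walk x y => w.getVert 1) hw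
    simpa [SimpleGraph.Walk.getVert_cons_succ, SimpleGraph.Walk.getVert_zero] using this
  -- ### not both pairs at distance 1
  have hK5 : ∀ x ∈ S, ¬(H.dist x (m x) = 1 ∧ H.dist (p x) (m (p x)) = 1) := by
    rintro x hx ⟨hd1, hd2⟩
    have hφxy := (hpS x hx).2
    have hxy : x ≠ p x := fun h => hpne x hx h.symm
    have ha1 : H.Adj x (m x) := SimpleGraph.dist_eq_one_iff_adj.mp hd1
    have ha2 : H.Adj (p x) (m (p x)) := SimpleGraph.dist_eq_one_iff_adj.mp hd2
    have h3 : H.dist x (m (p x)) = 1 := by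
      have h := hnat x (p x) hφxy
      rw [hd2] at h
      simpa using h
    have h4 : H.dist (p x) (m x) = 1 := by
      have h := hφ2 x (p x) hφxy
      rw [hd1] at h
      have : (H.dist (p x) (m x) : ℤ) = 1 := by rw [h]; decide
      exact_mod_cast this
    have ha3 : H.Adj x (m (p x)) := SimpleGraph.dist_eq_one_iff_adj.mp h3
    have ha4 : H.Adj (p x) (m x) := SimpleGraph.dist_eq_one_iff_adj.mp h4
    have hmm : m x = m (p x) := hcu x (p x) (m x) (m (p x)) hxy ha1 ha4.symm ha3 ha2.symm
    have : x = p x := by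
      have := congrArg m hmm
      rwa [hinv, hinv] at this
    exact hxy this
  -- ### the midpoint function b
  have hbex : ∀ x ∈ S, ∃ z, H.Adj x z ∧ H.Adj z (p x) := by
    intro x hx
    have hd : H.dist x (p x) = 2 := hφd x (p x) (hpS x hx).2
    have hne : H.dist x (p x) ≠ 0 := by omega
    obtain ⟨w, hwl⟩ := (SimpleGraph.Reachable.of_dist_ne_zero hne).exists_walk_length_eq_dist
    rw [hd] at hwl
    refine ⟨w.getVert 1, ?_, ?_⟩
    · have h0 := w.adj_getVert_succ (i := 0) (by omega)
      simpa using h0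
    · have h2 := w.adj_getVert_succ (i := 1) (by omega)
      have h3 : w.getVert 2 = p x := by rw [← hwl]; exact w.getVert_length
      rwa [h3] at h2
  set b : V → V := fun x => if h : x ∈ S ∧ ∃ z, H.Adj x z ∧ H.Adj z (p x) then h.2.choose else x
    with hbdef
  have hbS : ∀ x ∈ S, H.Adj x (b x) ∧ H.Adj (b x) (p x) := by
    intro x hx
    rw [hbdef]
    simp only []
    rw [dif_pos ⟨hx, hbex x hx⟩]
    exact (⟨hx, hbex x hx⟩ : x ∈ S ∧ ∃ z, H.Adj x z ∧ H.Adj z (p x)).2.choose_spec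
  have hboff : ∀ x, x ∉ S → b x = x := by
    intro x hx
    rw [hbdef]
    simp only []
    rw [dif_neg (fun h => hx h.1)]
  have hbval : ∀ x ∈ S, ∀ z, H.Adj x z → H.Adj z (p x) → b x = z := by
    intro x hx z h1 h2
    have hxy : x ≠ p x := fun h => hpne x hx h.symm
    exact hcu x (p x) (b x) z hxy (hbS x hx).1 (hbS x hx).2 h1 h2
  have hbp : ∀ x ∈ S, b (p x) = b x := by
    intro x hx
    apply hbval (p x) (hpSmem x hx) (b x) (hbS x hx).2.symm
    rw [hpp x hx]
    exact (hbS x hx).1.symm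
  have hbB : ∀ x ∈ S, b x ∉ A := by
    intro x hx
    have := hcross x (b x) (hbS x hx).1
    exact this.mp (hSA hx)

  -- ### measurability infrastructure
  have hDk : ∀ k : ℕ, 1 ≤ k → MeasurableSet {q : V × V | H.dist q.1 q.2 = k} :=
    fun k hk => Stmt8Aux.measurableSet_dist_eq hac hBorel k hk
  have heqP : ∀ (f g : V × V → V), Measurable f → Measurable g →
      MeasurableSet {q : V × V | f q = g q} := by
    intro f g hf hg
    have hset : {q : V × V | f q = g q} = {q : V × V | e (f q) = e (g q)} := by
      ext q
      exact ⟨fun h => by simp only [Set.mem_setOf_eq] at *; rw [h], fun h => he.injective h⟩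
    rw [hset]
    exact measurableSet_eq_fun (he.measurable.comp hf) (he.measurable.comp hg)
  have hφeq : ∀ x y : V, φ x y ↔ (H.dist x y = 2 ∧
      (∃ j, (Odd j ∧ j ≤ K) ∧ H.dist y (m y) = j ∧ H.dist x (m y) = (2 - (j : ℤ)).natAbs) ∧
      (∃ i, (Odd i ∧ i ≤ K) ∧ H.dist x (m x) = i ∧ H.dist y (m x) = (2 - (i : ℤ)).natAbs)) := by
    intro x y
    constructor
    · intro h
      refine ⟨hφd x y h, ⟨H.dist y (m y), ⟨(hmatch y).1, (hmatch y).2⟩, rfl, hnat x y h⟩,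
        ⟨H.dist x (m x), ⟨(hmatch x).1, (hmatch x).2⟩, rfl, ?_⟩⟩
      have h2 := hφ2 x y h
      have h3 : (H.dist y (m x) : ℤ) = ((2 - (H.dist x (m x) : ℤ)).natAbs : ℤ) := by
        rw [h2, Int.abs_eq_natAbs]
      exact_mod_cast h3
    · rintro ⟨hd, ⟨j, ⟨hjo, hjK⟩, hj1, hj2⟩, ⟨i, ⟨hio, hiK⟩, hi1, hi2⟩⟩
      have hdne : H.dist x y ≠ 0 := by omega
      have hre : H.Reachable x y := SimpleGraph.Reachable.of_dist_ne_zero hdne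
      apply (hφ x y).mpr
      refine ⟨hd, ?_, ?_⟩
      · apply (hray y x).mpr
        refine ⟨hre.symm, ?_⟩
        rw [show H.dist y x = H.dist x y from SimpleGraph.dist_comm, hd, hj1, hj2]
        exact (Int.abs_eq_natAbs _).symm
      · apply (hray x y).mpr
        refine ⟨hre, ?_⟩
        rw [hd, hi1, hi2]
        exact (Int.abs_eq_natAbs _).symm
  have hφmeas : MeasurableSet {q : V × V | φ q.1 q.2} := by
    have hrw : {q : V × V | φ q.1 q.2} = {q : V × V | H.dist q.1 q.2 = 2} ∩
        ((⋃ (j : ℕ) (_ : Odd j ∧ j ≤ K), ({q : V × V | H.dist q.2 (m q.2) = j} ∩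
            {q : V × V | H.dist q.1 (m q.2) = (2 - (j : ℤ)).natAbs})) ∩
         (⋃ (i : ℕ) (_ : Odd i ∧ i ≤ K), ({q : V × V | H.dist q.1 (m q.1) = i} ∩
            {q : V × V | H.dist q.2 (m q.1) = (2 - (i : ℤ)).natAbs}))) := by
      ext ⟨x, y⟩
      simp only [Set.mem_setOf_eq, Set.mem_inter_iff, Set.mem_iUnion, exists_prop]
      rw [hφeq x y]
    rw [hrw]
    refine (hDk 2 (by omega)).inter (MeasurableSet.inter ?_ ?_)
    · refine MeasurableSet.iUnion fun j => MeasurableSet.iUnion fun hj => ?_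
      have hj1 : 1 ≤ j := by
        have := hj.1; rw [Nat.odd_iff] at this; omega
      have hj2 : 1 ≤ (2 - (j : ℤ)).natAbs := by
        have := hj.1; rw [Nat.odd_iff] at this; omega
      exact ((hDk j hj1).preimage (measurable_snd.prodMk (hm.comp measurable_snd))).inter
        ((hDk _ hj2).preimage (measurable_fst.prodMk (hm.comp measurable_snd)))
    · refine MeasurableSet.iUnion fun i => MeasurableSet.iUnion fun hi => ?_
      have hi1 : 1 ≤ i := by
        have := hi.1; rw [Nat.odd_iff] at this; omega
      have hi2 : 1 ≤ (2 - (i : ℤ)).natAbs := by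
        have := hi.1; rw [Nat.odd_iff] at this; omega
      exact ((hDk i hi1).preimage (measurable_fst.prodMk (hm.comp measurable_fst))).inter
        ((hDk _ hi2).preimage (measurable_snd.prodMk (hm.comp measurable_fst)))
  have hΦmeas : MeasurableSet {q : V × V | q.1 ∈ A ∧ q.2 ∈ A ∧ φ q.1 q.2} := by
    have hrw : {q : V × V | q.1 ∈ A ∧ q.2 ∈ A ∧ φ q.1 q.2} =
        (Prod.fst ⁻¹' A) ∩ ((Prod.snd ⁻¹' A) ∩ {q : V × V | φ q.1 q.2}) := rfl
    rw [hrw]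
    exact (hA.preimage measurable_fst).inter ((hA.preimage measurable_snd).inter hφmeas)
  have hSmeas : MeasurableSet S := by
    have himg : Prod.fst '' {q : V × V | q.1 ∈ A ∧ q.2 ∈ A ∧ φ q.1 q.2} = S := by
      ext x
      simp only [Set.mem_image, Set.mem_setOf_eq]
      constructor
      · rintro ⟨⟨x', y⟩, ⟨h1, h2, h3⟩, rfl⟩
        exact (hSmem x').mpr ⟨h1, y, h2, h3⟩
      · intro hx
        obtain ⟨h1, y, h2, h3⟩ := (hSmem x).mp hx
        exact ⟨(x, y), ⟨h1, h2, h3⟩, rfl⟩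
    rw [← himg]
    refine hΦmeas.image_of_measurable_injOn measurable_fst ?_
    rintro ⟨x, y⟩ hxy ⟨x', y'⟩ hxy' h
    simp only at h
    subst h
    exact Prod.ext rfl (huniq x y y' hxy.1 hxy.2.1 hxy'.2.1 hxy.2.2 hxy'.2.2)
  have hpmeas : Measurable p := by
    apply Stmt8Aux.measurable_of_graph
    have hrw : {q : V × V | p q.1 = q.2} =
        {q : V × V | q.1 ∈ A ∧ q.2 ∈ A ∧ φ q.1 q.2} ∪
        ({q : V × V | q.1 ∈ Sᶜ} ∩ {q : V × V | q.2 = q.1}) := by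
      ext ⟨x, y⟩
      simp only [Set.mem_setOf_eq, Set.mem_union, Set.mem_inter_iff, Set.mem_compl_iff]
      by_cases hx : x ∈ S
      · constructor
        · intro hpx
          subst hpx
          exact Or.inl ⟨hSA hx, (hpS x hx).1, (hpS x hx).2⟩
        · rintro (⟨h1, h2, h3⟩ | ⟨h1, h2⟩)
          · exact hpval x y h1 h2 h3
          · exact absurd hx h1
      · rw [hpoff x hx]
        constructor
        · intro hxy; exact Or.inr ⟨hx, hxy.symm⟩
        · rintro (⟨h1, h2, h3⟩ | ⟨h1, h2⟩)
          · exact absurd ((hSmem x).mpr ⟨h1, y, h2, h3⟩) hx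
          · exact h2.symm
    rw [hrw]
    exact hΦmeas.union ((hSmeas.compl.preimage measurable_fst).inter
      (heqP _ _ measurable_snd measurable_fst))
  have hbmeas : Measurable b := by
    apply Stmt8Aux.measurable_of_graph
    have hrw : {q : V × V | b q.1 = q.2} =
        ({q : V × V | q.1 ∈ S} ∩ ({q : V × V | H.Adj q.1 q.2} ∩
          {q : V × V | H.Adj q.2 (p q.1)})) ∪
        ({q : V × V | q.1 ∈ Sᶜ} ∩ {q : V × V | q.2 = q.1}) := by
      ext ⟨x, y⟩
      simp only [Set.mem_setOf_eq, Set.mem_union, Set.mem_inter_iff, Set.mem_compl_iff]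
      by_cases hx : x ∈ S
      · constructor
        · intro hbx
          subst hbx
          exact Or.inl ⟨hx, (hbS x hx).1, (hbS x hx).2⟩
        · rintro (⟨h1, h2, h3⟩ | ⟨h1, h2⟩)
          · exact hbval x hx y h2 h3
          · exact absurd hx h1
      · rw [hboff x hx]
        constructor
        · intro hxy; exact Or.inr ⟨hx, hxy.symm⟩
        · rintro (⟨h1, h2, h3⟩ | ⟨h1, h2⟩)
          · exact absurd h1 hx
          · exact h2.symm
    rw [hrw]
    refine MeasurableSet.union ?_ ?_
    · exact (hSmeas.preimage measurable_fst).inter (hBorel.inter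
        (hBorel.preimage (measurable_snd.prodMk (hpmeas.comp measurable_fst))))
    · exact (hSmeas.compl.preimage measurable_fst).inter
        (heqP _ _ measurable_snd measurable_fst)
  have hm'meas : Measurable m' := by
    apply Stmt8Aux.measurable_of_graph
    have hrw : {q : V × V | m' q.1 = q.2} =
        (({q : V × V | q.1 ∈ S} ∩ {q : V × V | q.2 = m (p q.1)}) ∪
        (({q : V × V | q.1 ∈ A} ∩ {q : V × V | q.1 ∈ Sᶜ}) ∩ {q : V × V | q.2 = m q.1})) ∪
        ((({q : V × V | q.1 ∈ Aᶜ} ∩ {q : V × V | m q.1 ∈ S}) ∩ {q : V × V | q.2 = p (m q.1)}) ∪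
        (({q : V × V | q.1 ∈ Aᶜ} ∩ {q : V × V | m q.1 ∈ Sᶜ}) ∩ {q : V × V | q.2 = m q.1})) := by
      ext ⟨x, y⟩
      simp only [Set.mem_setOf_eq, Set.mem_union, Set.mem_inter_iff, Set.mem_compl_iff]
      by_cases hxA : x ∈ A
      · by_cases hxS : x ∈ S
        · rw [hm'S x hxS]
          constructor
          · intro h; exact Or.inl (Or.inl ⟨hxS, h.symm⟩)
          · rintro ((⟨h1, h2⟩ | ⟨⟨h1, h2⟩, h3⟩) | (⟨⟨h1, h2⟩, h3⟩ | ⟨⟨h1, h2⟩, h3⟩))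
            · exact h2.symm
            · exact absurd hxS h2
            · exact absurd hxA h1
            · exact absurd hxA h1
        · rw [hm'AnotS x hxA hxS]
          constructor
          · intro h; exact Or.inl (Or.inr ⟨⟨hxA, hxS⟩, h.symm⟩)
          · rintro ((⟨h1, h2⟩ | ⟨⟨h1, h2⟩, h3⟩) | (⟨⟨h1, h2⟩, h3⟩ | ⟨⟨h1, h2⟩, h3⟩))
            · exact absurd h1 hxS
            · exact h3.symm
            · exact absurd hxA h1
            · exact absurd hxA h1
      · have hxSno : x ∉ S := fun h => hxA (hSA h)
        by_cases hmxS : m x ∈ S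
        · rw [hm'B1 x hxA hmxS]
          constructor
          · intro h; exact Or.inr (Or.inl ⟨⟨hxA, hmxS⟩, h.symm⟩)
          · rintro ((⟨h1, h2⟩ | ⟨⟨h1, h2⟩, h3⟩) | (⟨⟨h1, h2⟩, h3⟩ | ⟨⟨h1, h2⟩, h3⟩))
            · exact absurd h1 hxSno
            · exact absurd h1 hxA
            · exact h3.symm
            · exact absurd hmxS h2
        · rw [hm'B2 x hxA hmxS]
          constructor
          · intro h; exact Or.inr (Or.inr ⟨⟨hxA, hmxS⟩, h.symm⟩)
          · rintro ((⟨h1, h2⟩ | ⟨⟨h1, h2⟩, h3⟩) | (⟨⟨h1, h2⟩, h3⟩ | ⟨⟨h1, h2⟩, h3⟩))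
            · exact absurd h1 hxSno
            · exact absurd h1 hxA
            · exact absurd h2 hmxS
            · exact h3.symm
    rw [hrw]
    refine MeasurableSet.union (MeasurableSet.union ?_ ?_) (MeasurableSet.union ?_ ?_)
    · exact (hSmeas.preimage measurable_fst).inter
        (heqP _ _ measurable_snd (hm.comp (hpmeas.comp measurable_fst)))
    · exact (((hA.preimage measurable_fst)).inter (hSmeas.compl.preimage measurable_fst)).inter
        (heqP _ _ measurable_snd (hm.comp measurable_fst))
    · exact ((hA.compl.preimage measurable_fst).inter
        (hSmeas.preimage (hm.comp measurable_fst))).inter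
        (heqP _ _ measurable_snd (hpmeas.comp (hm.comp measurable_fst)))
    · exact ((hA.compl.preimage measurable_fst).inter
        (hSmeas.compl.preimage (hm.comp measurable_fst))).inter
        (heqP _ _ measurable_snd (hm.comp measurable_fst))

  -- ### neighbours of midpoints
  have hnbhd : ∀ x ∈ S, {w | H.Adj (b x) w} = {x, p x} := by
    intro x hx
    have hsub : {x, p x} ⊆ {w | H.Adj (b x) w} := by
      intro w hw
      simp only [Set.mem_insert_iff, Set.mem_singleton_iff] at hw
      show H.Adj (b x) w
      rcases hw with h | h
      · rw [h]; exact (hbS x hx).1.symm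
      · rw [h]; exact (hbS x hx).2
    have hpair : ({x, p x} : Set V).encard = 2 :=
      Set.encard_pair (fun h => hpne x hx h.symm)
    have hfin : ({x, p x} : Set V).Finite := (Set.finite_singleton (p x)).insert x
    exact (hfin.eq_of_subset_of_encard_le hsub (by rw [hreg (b x), hpair])).symm
  have hbinj : ∀ U : Set V, U ⊆ S → (∀ x ∈ U, p x ∉ U) →
      ∀ x ∈ U, ∀ x' ∈ U, b x = b x' → x = x' := by
    intro U hUS hUp x hx x' hx' hbb
    have h1 : x' ∈ {w | H.Adj (b x) w} := by
      rw [hbb]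
      exact (hbS x' (hUS hx')).1.symm
    rw [hnbhd x (hUS hx)] at h1
    rcases h1 with h | h
    · exact h.symm
    · exact absurd (h ▸ hx') (hUp x hx)
  -- ### generic swap involution along U
  have hswap : ∀ U : Set V, MeasurableSet U → U ⊆ S → (∀ x ∈ U, p x ∉ U) →
      ∃ σ : V → V, Measurable σ ∧ Function.Involutive σ ∧
        (∀ x, σ x = x ∨ H.Adj x (σ x)) ∧ (∀ x ∈ U, σ x = b x) ∧
        (∀ x ∈ U, σ (b x) = x) ∧ (∀ y, y ∉ U → (∀ x ∈ U, b x ≠ y) → σ y = y) := by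
    intro U hUmeas hUS hUp
    have hbinjU := hbinj U hUS hUp
    have hbUB : ∀ x ∈ U, b x ∉ A := fun x hx => hbB x (hUS hx)
    have hbUnotU : ∀ x ∈ U, b x ∉ U := fun x hx h => (hbUB x hx) (hSA (hUS h))
    set σ : V → V := fun y => if y ∈ U then b y else
      if h : ∃ x ∈ U, b x = y then h.choose else y with hσdef
    have hσU : ∀ x ∈ U, σ x = b x := by
      intro x hx
      rw [hσdef]
      simp only [if_pos hx]
    have hσbU : ∀ x ∈ U, σ (b x) = x := by
      intro x hx
      rw [hσdef]
      simp only [if_neg (hbUnotU x hx)]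
      have hex : ∃ x' ∈ U, b x' = b x := ⟨x, hx, rfl⟩
      rw [dif_pos hex]
      exact hbinjU _ hex.choose_spec.1 x hx hex.choose_spec.2
    have hσoff : ∀ y, y ∉ U → (∀ x ∈ U, b x ≠ y) → σ y = y := by
      intro y hy hby
      rw [hσdef]
      simp only [if_neg hy]
      rw [dif_neg]
      rintro ⟨x, hx, hbx⟩
      exact hby x hx hbx
    have hσinv : Function.Involutive σ := by
      intro y
      by_cases hy : y ∈ U
      · rw [hσU y hy, hσbU y hy]
      · by_cases hex : ∃ x ∈ U, b x = y
        · obtain ⟨x, hx, rfl⟩ := hex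
          rw [hσbU x hx, hσU x hx]
        · rw [hσoff y hy (fun x hx hbx => hex ⟨x, hx, hbx⟩),
            hσoff y hy (fun x hx hbx => hex ⟨x, hx, hbx⟩)]
    have hσnb : ∀ x, σ x = x ∨ H.Adj x (σ x) := by
      intro y
      by_cases hy : y ∈ U
      · rw [hσU y hy]
        exact Or.inr (hbS y (hUS hy)).1
      · by_cases hex : ∃ x ∈ U, b x = y
        · obtain ⟨x, hx, rfl⟩ := hex
          rw [hσbU x hx]
          exact Or.inr (hbS x (hUS hx)).1.symm
        · exact Or.inl (hσoff y hy (fun x hx hbx => hex ⟨x, hx, hbx⟩))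
    have hσmeas : Measurable σ := by
      apply Stmt8Aux.measurable_of_graph
      have hbU : MeasurableSet (b '' U) :=
        hUmeas.image_of_measurable_injOn hbmeas (fun x hx x' hx' hxy => hbinjU x hx x' hx' hxy)
      have hrw : {q : V × V | σ q.1 = q.2} =
          (({q : V × V | q.1 ∈ U} ∩ {q : V × V | q.2 = b q.1}) ∪
           ({q : V × V | q.1 ∈ Uᶜ} ∩ ({q : V × V | q.2 ∈ U} ∩ {q : V × V | b q.2 = q.1}))) ∪
          (({q : V × V | q.1 ∈ Uᶜ} ∩ {q : V × V | q.1 ∈ (b '' U)ᶜ}) ∩ {q : V × V | q.2 = q.1}) := by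
        ext ⟨y, z⟩
        simp only [Set.mem_setOf_eq, Set.mem_union, Set.mem_inter_iff, Set.mem_compl_iff]
        by_cases hy : y ∈ U
        · rw [hσU y hy]
          constructor
          · intro h
            exact Or.inl (Or.inl ⟨hy, h.symm⟩)
          · rintro ((⟨h1, h2⟩ | ⟨h1, h2, h3⟩) | ⟨⟨h1, h2⟩, h3⟩)
            · exact h2.symm
            · exact absurd hy h1
            · exact absurd hy h1
        · by_cases hex : ∃ x ∈ U, b x = y
          · obtain ⟨x, hx, rfl⟩ := hex
            rw [hσbU x hx]
            constructor
            · intro h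
              exact Or.inl (Or.inr ⟨hbUnotU x hx, h ▸ hx, by rw [← h]⟩)
            · rintro ((⟨h1, h2⟩ | ⟨h1, h2, h3⟩) | ⟨⟨h1, h2⟩, h3⟩)
              · exact absurd h1 hy
              · exact hbinjU x hx z h2 h3.symm
              · exact absurd (⟨x, hx, rfl⟩ : b x ∈ b '' U) h2
          · rw [hσoff y hy (fun x hx hbx => hex ⟨x, hx, hbx⟩)]
            constructor
            · intro h
              refine Or.inr ⟨⟨hy, ?_⟩, h.symm⟩
              rintro ⟨x, hx, hbx⟩
              exact hex ⟨x, hx, hbx⟩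
            · rintro ((⟨h1, h2⟩ | ⟨h1, h2, h3⟩) | ⟨⟨h1, h2⟩, h3⟩)
              · exact absurd h1 hy
              · exact absurd ⟨z, h2, h3⟩ hex
              · exact h3.symm
      rw [hrw]
      refine MeasurableSet.union (MeasurableSet.union ?_ ?_) ?_
      · exact (hUmeas.preimage measurable_fst).inter
          (heqP _ _ measurable_snd (hbmeas.comp measurable_fst))
      · exact (hUmeas.compl.preimage measurable_fst).inter
          ((hUmeas.preimage measurable_snd).inter
            (heqP _ _ (hbmeas.comp measurable_snd) measurable_fst))
      · exact ((hUmeas.compl.preimage measurable_fst).inter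
          (hbU.compl.preimage measurable_fst)).inter
          (heqP _ _ measurable_snd measurable_fst)
    exact ⟨σ, hσmeas, hσinv, hσnb, hσU, hσbU, hσoff⟩
  -- ### the two halves of S
  set S₁ : Set V := {x | x ∈ S ∧ e x < e (p x)} with hS1def
  set S₂ : Set V := {x | x ∈ S ∧ e (p x) < e x} with hS2def
  have hS1meas : MeasurableSet S₁ := by
    refine hSmeas.inter ?_
    exact measurableSet_lt (he.measurable) (he.measurable.comp hpmeas)
  have hS2meas : MeasurableSet S₂ := by
    refine hSmeas.inter ?_
    exact measurableSet_lt (he.measurable.comp hpmeas) (he.measurable)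
  have hS1S : S₁ ⊆ S := fun x hx => hx.1
  have hS2S : S₂ ⊆ S := fun x hx => hx.1
  have hS12 : ∀ x ∈ S, x ∈ S₁ ∨ x ∈ S₂ := by
    intro x hx
    rcases lt_trichotomy (e x) (e (p x)) with h | h | h
    · exact Or.inl ⟨hx, h⟩
    · exact absurd (he.injective h) (fun hh => hpne x hx hh.symm)
    · exact Or.inr ⟨hx, h⟩
  have hpS1 : ∀ x ∈ S₁, p x ∈ S₂ := by
    intro x hx
    refine ⟨hpSmem x hx.1, ?_⟩
    rw [hpp x hx.1]
    exact hx.2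
  have hpS2 : ∀ x ∈ S₂, p x ∈ S₁ := by
    intro x hx
    refine ⟨hpSmem x hx.1, ?_⟩
    rw [hpp x hx.1]
    exact hx.2
  have hS1p : ∀ x ∈ S₁, p x ∉ S₁ := by
    intro x hx h
    exact absurd ((hpS1 x hx).2) (not_lt.mpr (le_of_lt h.2))
  have hS2p : ∀ x ∈ S₂, p x ∉ S₂ := by
    intro x hx h
    exact absurd ((hpS2 x hx).2) (not_lt.mpr (le_of_lt h.2))
  obtain ⟨σ₁, hσ₁meas, hσ₁inv, hσ₁nb, hσ₁U, hσ₁bU, hσ₁off⟩ := hswap S₁ hS1meas hS1S hS1p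
  obtain ⟨σ₂, hσ₂meas, hσ₂inv, hσ₂nb, hσ₂U, hσ₂bU, hσ₂off⟩ := hswap S₂ hS2meas hS2S hS2p
  set F : V → V := fun x => σ₁ (σ₂ (σ₁ x)) with hFdef
  have hbnotA : ∀ x ∈ S, ∀ y ∈ A, b x ≠ y := fun x hx y hy h => (hbB x hx) (h ▸ hy)
  have hd21 : ∀ x, x ∈ S₂ → x ∉ S₁ := fun x h2 h1 => absurd h2.2 (not_lt.mpr (le_of_lt h1.2))
  have hFS : ∀ x ∈ S, F x = p x := by
    intro x hx
    rcases hS12 x hx with hx1 | hx2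
    · show σ₁ (σ₂ (σ₁ x)) = p x
      rw [hσ₁U x hx1, show b x = b (p x) from (hbp x hx).symm,
        hσ₂bU (p x) (hpS1 x hx1)]
      exact hσ₁off (p x) (hd21 (p x) (hpS1 x hx1))
        (fun x' hx' => hbnotA x' (hS1S hx') (p x) (hpS x hx).1)
    · show σ₁ (σ₂ (σ₁ x)) = p x
      rw [hσ₁off x (hd21 x hx2) (fun x' hx' => hbnotA x' (hS1S hx') x (hSA hx)),
        hσ₂U x hx2, show b x = b (p x) from (hbp x hx).symm,
        hσ₁bU (p x) (hpS2 x hx2)]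
  have hFoff : ∀ x, x ∉ S → F x = x := by
    intro x hx
    by_cases hex : ∃ x' ∈ S₁, b x' = x
    · obtain ⟨x', hx', rfl⟩ := hex
      show σ₁ (σ₂ (σ₁ (b x'))) = b x'
      rw [hσ₁bU x' hx']
      have h2 : σ₂ x' = x' := by
        apply hσ₂off x' (fun h => absurd hx'.2 (not_lt.mpr (le_of_lt h.2)))
        intro z hz
        exact hbnotA z (hS2S hz) x' (hSA (hS1S hx'))
      rw [h2, hσ₁U x' hx']
    · have h1 : σ₁ x = x := hσ₁off x (fun h => hx (hS1S h)) (fun z hz hb => hex ⟨z, hz, hb⟩)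
      show σ₁ (σ₂ (σ₁ x)) = x
      rw [h1]
      have h2 : σ₂ x = x := by
        apply hσ₂off x (fun h => hx (hS2S h))
        intro z hz hb
        exact hex ⟨p z, hpS2 z hz, by rw [hbp z (hS2S hz)]; exact hb⟩
      rw [h2, h1]
  -- ### F is measure preserving
  let E₁ : V ≃ᵐ V :=
    { toEquiv := hσ₁inv.toPerm σ₁, measurable_toFun := hσ₁meas, measurable_invFun := hσ₁meas }
  let E₂ : V ≃ᵐ V :=
    { toEquiv := hσ₂inv.toPerm σ₂, measurable_toFun := hσ₂meas, measurable_invFun := hσ₂meas }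
  have hpres₁ : MeasurePreserving σ₁ μ μ := hpres E₁ (fun x => hσ₁nb x)
  have hpres₂ : MeasurePreserving σ₂ μ μ := hpres E₂ (fun x => hσ₂nb x)
  have hprF : MeasurePreserving F μ μ := hpres₁.comp (hpres₂.comp hpres₁)
  have hembF : MeasurableEmbedding F := by
    have h1 : ⇑(E₁.trans (E₂.trans E₁)) = F := rfl
    exact h1 ▸ (E₁.trans (E₂.trans E₁)).measurableEmbedding
  -- ### measurable distance functions
  have hdmeas : Measurable (fun x => H.dist x (m x)) := by
    apply measurable_to_countable'
    intro j
    rcases Nat.eq_zero_or_pos j with rfl | hj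
    · have hempty : (fun x => H.dist x (m x)) ⁻¹' {0} = ∅ := by
        ext x
        simp only [Set.mem_preimage, Set.mem_singleton_iff, Set.mem_empty_iff_false, iff_false]
        intro h0
        have ho := (hmatch x).1
        rw [h0, Nat.odd_iff] at ho
        omega
      rw [hempty]; exact MeasurableSet.empty
    · have hrw : (fun x => H.dist x (m x)) ⁻¹' {j} =
          (fun x => (x, m x)) ⁻¹' {q : V × V | H.dist q.1 q.2 = j} := rfl
      rw [hrw]
      exact (hDk j hj).preimage (measurable_id.prodMk hm)
  have hd'meas : Measurable (fun x => H.dist x (m' x)) := by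
    apply measurable_to_countable'
    intro j
    rcases Nat.eq_zero_or_pos j with rfl | hj
    · have hempty : (fun x => H.dist x (m' x)) ⁻¹' {0} = ∅ := by
        ext x
        simp only [Set.mem_preimage, Set.mem_singleton_iff, Set.mem_empty_iff_false, iff_false]
        intro h0
        have ho := (hpart3 x).1
        rw [h0, Nat.odd_iff] at ho
        omega
      rw [hempty]; exact MeasurableSet.empty
    · have hrw : (fun x => H.dist x (m' x)) ⁻¹' {j} =
          (fun x => (x, m' x)) ⁻¹' {q : V × V | H.dist q.1 q.2 = j} := rfl
      rw [hrw]
      exact (hDk j hj).preimage (measurable_id.prodMk hm'meas)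
  have hfM : Measurable (fun x => (H.dist x (m x) : ℝ)) :=
    (measurable_of_countable (fun n : ℕ => (n : ℝ))).comp hdmeas
  have hfM' : Measurable (fun x => (H.dist x (m' x) : ℝ)) :=
    (measurable_of_countable (fun n : ℕ => (n : ℝ))).comp hd'meas
  have hIntB : ∀ (g : V → ℝ) (C : ℝ), Measurable g → (∀ x, |g x| ≤ C) → Integrable g μ := by
    intro g C hg hb
    exact (integrable_const C).mono' hg.aestronglyMeasurable
      (Filter.Eventually.of_forall (fun x => by simpa [Real.norm_eq_abs] using hb x))
  have hintM : Integrable (fun x => (H.dist x (m x) : ℝ)) μ := by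
    refine hIntB _ (K : ℝ) hfM (fun x => ?_)
    rw [abs_of_nonneg (by positivity)]
    exact_mod_cast (hmatch x).2
  have hintM' : Integrable (fun x => (H.dist x (m' x) : ℝ)) μ := by
    refine hIntB _ (K : ℝ) hfM' (fun x => ?_)
    rw [abs_of_nonneg (by positivity)]
    exact_mod_cast (hpart3 x).2
  have hintMp : Integrable (fun x => (H.dist (p x) (m (p x)) : ℝ)) μ := by
    refine hIntB _ (K : ℝ) (hfM.comp hpmeas) (fun x => ?_)
    rw [abs_of_nonneg (by positivity)]
    exact_mod_cast (hmatch (p x)).2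
  -- ### the set T
  set T : Set V := {x | x ∈ S ∧ 3 ≤ H.dist x (m x)} with hTdef
  have hTmeas : MeasurableSet T := by
    have hrw : T = S ∩ ((fun x => H.dist x (m x)) ⁻¹' (Set.Ici 3)) := rfl
    rw [hrw]
    exact hSmeas.inter (hdmeas ((Set.to_countable _).measurableSet))
  have hTS : T ⊆ S := fun x hx => hx.1
  have hcov : S ⊆ T ∪ p ⁻¹' T := by
    intro x hx
    have h1 := (hmatch x).1
    have h2 := (hmatch (p x)).1
    have h5 := hK5 x hx
    by_cases h3 : 3 ≤ H.dist x (m x)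
    · exact Or.inl ⟨hx, h3⟩
    · right
      have hd1 : H.dist x (m x) = 1 := by rw [Nat.odd_iff] at h1; omega
      have hd2 : ¬ (H.dist (p x) (m (p x)) = 1) := fun h => h5 ⟨hd1, h⟩
      have h6 : 3 ≤ H.dist (p x) (m (p x)) := by rw [Nat.odd_iff] at h2; omega
      exact ⟨hpSmem x hx, h6⟩
  have hpreim : F ⁻¹' T = p ⁻¹' T := by
    ext x
    simp only [Set.mem_preimage]
    by_cases hx : x ∈ S
    · rw [hFS x hx]
    · rw [hFoff x hx, hpoff x hx]
  have hμT : μ (p ⁻¹' T) = μ T := by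
    rw [← hpreim]
    exact hprF.measure_preimage hTmeas.nullMeasurableSet
  have hμST : μ S ≤ 2 * μ T := by
    calc μ S ≤ μ (T ∪ p ⁻¹' T) := measure_mono hcov
      _ ≤ μ T + μ (p ⁻¹' T) := measure_union_le _ _
      _ = 2 * μ T := by rw [hμT, two_mul]
  have hμSTreal : (μ S).toReal ≤ 2 * (μ T).toReal := by
    have h1 := ENNReal.toReal_mono (ENNReal.mul_ne_top (by norm_num) (measure_ne_top μ T)) hμST
    rwa [ENNReal.toReal_mul, (show (2:ENNReal).toReal = 2 by norm_num)] at h1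
  -- ### change of variables
  have hcv : ∀ g : V → ℝ, ∫ x, g (F x) ∂μ = ∫ x, g x ∂μ :=
    fun g => hprF.integral_comp hembF g
  have key1 : ∫ x in S, (H.dist (p x) (m (p x)) : ℝ) ∂μ = ∫ x in S, (H.dist x (m x) : ℝ) ∂μ := by
    have h2 : ∀ x, S.indicator (fun x => (H.dist (p x) (m (p x)) : ℝ)) x =
        S.indicator (fun y => (H.dist y (m y) : ℝ)) (F x) := by
      intro x
      by_cases hx : x ∈ S
      · rw [hFS x hx, Set.indicator_of_mem (hpSmem x hx), Set.indicator_of_mem hx]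
      · rw [hFoff x hx, Set.indicator_of_notMem hx, Set.indicator_of_notMem hx]
    have h1 := hcv (S.indicator (fun y => (H.dist y (m y) : ℝ)))
    rw [integral_indicator hSmeas] at h1
    rw [← h1, ← integral_indicator hSmeas]
    exact integral_congr_ae (Filter.Eventually.of_forall h2)
  have key2 : ∫ x in S, T.indicator (fun _ => (1:ℝ)) (p x) ∂μ = (μ T).toReal := by
    have h2 : ∀ x, S.indicator (fun x => T.indicator (fun _ => (1:ℝ)) (p x)) x =
        T.indicator (fun _ => (1:ℝ)) (F x) := by
      intro x
      by_cases hx : x ∈ S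
      · rw [hFS x hx, Set.indicator_of_mem hx]
      · rw [hFoff x hx, Set.indicator_of_notMem hx,
          Set.indicator_of_notMem (fun h => hx (hTS h))]
    have h1 := hcv (T.indicator (fun _ => (1:ℝ)))
    rw [integral_indicator hTmeas, setIntegral_const] at h1
    rw [← integral_indicator hSmeas]
    calc ∫ x, S.indicator (fun x => T.indicator (fun _ => (1:ℝ)) (p x)) x ∂μ
        = ∫ x, T.indicator (fun _ => (1:ℝ)) (F x) ∂μ :=
          integral_congr_ae (Filter.Eventually.of_forall h2)
      _ = (μ T).toReal := by rw [h1]; simp; rfl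
  have key3 : ∀ x ∈ S, (H.dist x (m' x) : ℝ) =
      (H.dist (p x) (m (p x)) : ℝ) - 2 * T.indicator (fun _ => (1:ℝ)) (p x) := by
    intro x hx
    have hj := hnat x (p x) (hpS x hx).2
    by_cases h3 : 3 ≤ H.dist (p x) (m (p x))
    · have hpT : p x ∈ T := ⟨hpSmem x hx, h3⟩
      rw [Set.indicator_of_mem hpT]
      rw [hm'S x hx, hj]
      have hnA : (2 - (H.dist (p x) (m (p x)) : ℤ)).natAbs = H.dist (p x) (m (p x)) - 2 := by
        omega
      rw [hnA]
      rw [Nat.cast_sub (by omega)]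
      push_cast
      ring
    · have hj1 : H.dist (p x) (m (p x)) = 1 := by
        have ho := (hmatch (p x)).1
        rw [Nat.odd_iff] at ho
        omega
      rw [Set.indicator_of_notMem (fun h => h3 h.2)]
      rw [hm'S x hx, hj, hj1]
      norm_num
  have hSeq : ∫ x in S, (H.dist x (m' x) : ℝ) ∂μ =
      ∫ x in S, (H.dist x (m x) : ℝ) ∂μ - 2 * (μ T).toReal := by
    rw [setIntegral_congr_fun hSmeas key3]
    have hint2 : Integrable (fun x => 2 * T.indicator (fun _ => (1:ℝ)) (p x)) μ := by
      refine hIntB _ 2 (measurable_const.mul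
        ((measurable_const.indicator hTmeas).comp hpmeas)) (fun x => ?_)
      by_cases hx : p x ∈ T
      · rw [Set.indicator_of_mem hx]; norm_num
      · rw [Set.indicator_of_notMem hx]; norm_num
    rw [integral_sub hintMp.integrableOn hint2.integrableOn]
    rw [integral_const_mul, key1, key2]
  have hA'S : S ∪ (A \ S) = A := Set.union_diff_cancel hSA
  have hdisjS : Disjoint S (A \ S) := Set.disjoint_sdiff_right
  have hsplit' : ∫ x in A, (H.dist x (m' x) : ℝ) ∂μ =
      ∫ x in S, (H.dist x (m' x) : ℝ) ∂μ + ∫ x in A \ S, (H.dist x (m' x) : ℝ) ∂μ := by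
    have h0 := setIntegral_union hdisjS (hA.diff hSmeas) hintM'.integrableOn hintM'.integrableOn
    rwa [hA'S] at h0
  have hsplit : ∫ x in A, (H.dist x (m x) : ℝ) ∂μ =
      ∫ x in S, (H.dist x (m x) : ℝ) ∂μ + ∫ x in A \ S, (H.dist x (m x) : ℝ) ∂μ := by
    have h0 := setIntegral_union hdisjS (hA.diff hSmeas) hintM.integrableOn hintM.integrableOn
    rwa [hA'S] at h0
  have hANS : ∫ x in A \ S, (H.dist x (m' x) : ℝ) ∂μ =
      ∫ x in A \ S, (H.dist x (m x) : ℝ) ∂μ := by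
    refine setIntegral_congr_fun (hA.diff hSmeas) (fun x hx => ?_)
    rw [hm'AnotS x hx.1 hx.2]
  refine ⟨hm'meas, hinv', hpart3, ?_⟩
  rw [hsplit', hsplit, hSeq, hANS]
  linarith [hμSTreal]
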